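/- For A-bounded operators T, S and α ∈ [0,1), ‖TS‖_{A,α} ≤ min{2/sqrt(1−α), 1/(1−α), 4} · ‖T‖_{A,α} ‖S‖_{A,α}. -/

import Mathlib

open scoped ComplexOrder
open ContinuousLinearMap Filter Topology

variable {H : Type*} [NormedAddCommGroup H] [InnerProductSpace ℂ H] [CompleteSpace H]

/-- The A-semi-inner product `⟨x, y⟩_A = ⟨A x, y⟩` (Mathlib convention: conjugate
linear in the first variable). -/
noncomputable def aInner (A : H →L[ℂ] H) (x y : H) : ℂ := inner ℂ (A x) y

/-- The A-seminorm `‖x‖_A = sqrt ⟨x, x⟩_A`. -/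
noncomputable def aNorm (A : H →L[ℂ] H) (x : H) : ℝ := Real.sqrt (aInner A x x).re

/-- `T` is A-bounded. -/
def ABounded (A T : H →L[ℂ] H) : Prop := ∃ c > 0, ∀ x, aNorm A (T x) ≤ c * aNorm A x

/-- The A-operator seminorm. -/
noncomputable def opNormA (A T : H →L[ℂ] H) : ℝ :=
  sSup {r | ∃ x ∈ closure (Set.range A), aNorm A x = 1 ∧ r = aNorm A (T x)}

/-- The A-numerical radius. -/
noncomputable def wA (A T : H →L[ℂ] H) : ℝ :=
  sSup {r | ∃ x, aNorm A x = 1 ∧ r = ‖aInner A (T x) x‖}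

/-- The A-Crawford number. -/
noncomputable def cA (A T : H →L[ℂ] H) : ℝ :=
  sInf {r | ∃ x, aNorm A x = 1 ∧ r = ‖aInner A (T x) x‖}

/-- The `A_α`-seminorm `‖T‖_{A,α}`. -/
noncomputable def alphaNorm (A T : H →L[ℂ] H) (α : ℝ) : ℝ :=
  sSup {r | ∃ x, aNorm A x = 1 ∧
    r = Real.sqrt (α * ‖aInner A (T x) x‖ ^ 2 + (1 - α) * aNorm A (T x) ^ 2)}

/-- `S` is the A-adjoint `T^{♯_A}` of `T`: the solution of `A X = T* A` whose
range lies in the closure of the range of `A`. -/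
def IsAAdjoint (A T S : H →L[ℂ] H) : Prop :=
  A ∘L S = (ContinuousLinearMap.adjoint T) ∘L A ∧ ∀ x, S x ∈ closure (Set.range A)

section Aux
set_option linter.unusedSectionVars false
variable {A : H →L[ℂ] H}

lemma aInner_conj_symm (hA : A.IsPositive) (x y : H) : (starRingEnd ℂ) (aInner A y x) = aInner A x y := by
  rw [aInner, aInner, inner_conj_symm, ← ContinuousLinearMap.adjoint_inner_right]
  rw [ContinuousLinearMap.isSelfAdjoint_iff'.mp hA.isSelfAdjoint]

lemma aInner_re_nonneg (hA : A.IsPositive) (x : H) : 0 ≤ (aInner A x x).re := hA.re_inner_nonneg_left x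

lemma aNorm_nonneg (x : H) : 0 ≤ aNorm A x := Real.sqrt_nonneg _

lemma aNorm_sq (hA : A.IsPositive) (x : H) : aNorm A x ^ 2 = (aInner A x x).re :=
  Real.sq_sqrt (aInner_re_nonneg hA x)

lemma aInner_add_left (x y z : H) : aInner A (x + y) z = aInner A x z + aInner A y z := by
  simp [aInner, map_add, inner_add_left]

lemma aInner_add_right (x y z : H) : aInner A x (y + z) = aInner A x y + aInner A x z := by
  simp [aInner, inner_add_right]

lemma aInner_smul_left (c : ℂ) (x y : H) :
    aInner A (c • x) y = (starRingEnd ℂ) c * aInner A x y := by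
  simp [aInner, map_smul, inner_smul_left, mul_comm]

lemma aInner_smul_right (c : ℂ) (x y : H) : aInner A x (c • y) = c * aInner A x y := by
  simp [aInner, inner_smul_right]

noncomputable def aCore (A : H →L[ℂ] H) (hA : A.IsPositive) : PreInnerProductSpace.Core ℂ H where
  inner x y := aInner A x y
  conj_inner_symm := aInner_conj_symm hA
  re_inner_nonneg := aInner_re_nonneg hA
  add_left := aInner_add_left
  smul_left x y r := aInner_smul_left r x y

lemma abs_aInner_le (hA : A.IsPositive) (x y : H) : ‖aInner A x y‖ ≤ aNorm A x * aNorm A y := by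
  have h : ‖aInner A x y‖ * ‖aInner A y x‖ ≤ (aInner A x x).re * (aInner A y y).re :=
    @InnerProductSpace.Core.inner_mul_inner_self_le ℂ H _ _ _ (aCore A hA) x y
  have hsymm : ‖aInner A y x‖ = ‖aInner A x y‖ := by
    rw [← aInner_conj_symm hA x y, RCLike.norm_conj]
  rw [hsymm, ← sq] at h
  rw [aNorm, aNorm, ← Real.sqrt_mul (aInner_re_nonneg hA x),
    show ‖aInner A x y‖ = Real.sqrt (‖aInner A x y‖ ^ 2) from (Real.sqrt_sq (norm_nonneg _)).symm]
  exact Real.sqrt_le_sqrt h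

lemma aNorm_smul (c : ℂ) (x : H) : aNorm A (c • x) = ‖c‖ * aNorm A x := by
  rw [aNorm, aNorm, aInner_smul_left, aInner_smul_right, ← mul_assoc,
    Complex.conj_mul']
  rw [show ((‖c‖ : ℂ) ^ 2 * aInner A x x).re = ‖c‖ ^ 2 * (aInner A x x).re by
    rw [← Complex.ofReal_pow, Complex.re_ofReal_mul]]
  rw [Real.sqrt_mul (by positivity), Real.sqrt_sq (by positivity)]


lemma aInner_sub_left (x y z : H) : aInner A (x - y) z = aInner A x z - aInner A y z := by
  simp [aInner, map_sub, inner_sub_left]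

lemma aInner_sub_right (x y z : H) : aInner A x (y - z) = aInner A x y - aInner A x z := by
  simp [aInner, inner_sub_right]

lemma aInner_self_ofReal (hA : A.IsPositive) (x : H) :
    aInner A x x = ((aInner A x x).re : ℂ) :=
  (Complex.conj_eq_iff_re.mp (aInner_conj_symm hA x x)).symm

lemma alphaNorm_nonneg (T : H →L[ℂ] H) (α : ℝ) : 0 ≤ alphaNorm A T α :=
  Real.sSup_nonneg (by rintro r ⟨x, hx, rfl⟩; positivity)

variable {T : H →L[ℂ] H} {α : ℝ}

lemma alphaNorm_bddAbove (hA : A.IsPositive) (hT : ABounded A T) (hα : α ∈ Set.Ico (0:ℝ) 1) :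
    BddAbove {r | ∃ x, aNorm A x = 1 ∧
      r = Real.sqrt (α * ‖aInner A (T x) x‖ ^ 2 + (1 - α) * aNorm A (T x) ^ 2)} := by
  obtain ⟨c, hc, hb⟩ := hT
  refine ⟨c, ?_⟩
  rintro r ⟨x, hx, rfl⟩
  have hb1 : aNorm A (T x) ≤ c := by simpa [hx] using hb x
  have ha1 : ‖aInner A (T x) x‖ ≤ aNorm A (T x) := by
    simpa [hx] using abs_aInner_le hA (T x) x
  have hnn := aNorm_nonneg (A := A) (T x)
  have habs : (0:ℝ) ≤ ‖aInner A (T x) x‖ := (norm_nonneg _)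
  have hq1 : ‖aInner A (T x) x‖ ^ 2 ≤ aNorm A (T x) ^ 2 :=
    pow_le_pow_left₀ habs ha1 2
  have hq2 : aNorm A (T x) ^ 2 ≤ c ^ 2 := pow_le_pow_left₀ hnn hb1 2
  have h2 : α * ‖aInner A (T x) x‖ ^ 2 + (1 - α) * aNorm A (T x) ^ 2 ≤ c ^ 2 := by
    nlinarith [mul_le_mul_of_nonneg_left hq1 hα.1, hα.2]
  calc Real.sqrt (α * ‖aInner A (T x) x‖ ^ 2 + (1 - α) * aNorm A (T x) ^ 2)
      ≤ Real.sqrt (c ^ 2) := Real.sqrt_le_sqrt h2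
    _ = c := Real.sqrt_sq hc.le

lemma le_alphaNorm (hA : A.IsPositive) (hT : ABounded A T) (hα : α ∈ Set.Ico (0:ℝ) 1)
    {x : H} (hx : aNorm A x = 1) :
    Real.sqrt (α * ‖aInner A (T x) x‖ ^ 2 + (1 - α) * aNorm A (T x) ^ 2)
      ≤ alphaNorm A T α :=
  le_csSup (alphaNorm_bddAbove hA hT hα) ⟨x, hx, rfl⟩

lemma abs_aInner_le_alphaNorm (hA : A.IsPositive) (hT : ABounded A T)
    (hα : α ∈ Set.Ico (0:ℝ) 1) {x : H} (hx : aNorm A x = 1) :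
    ‖aInner A (T x) x‖ ≤ alphaNorm A T α := by
  have h1 := le_alphaNorm hA hT hα hx
  have ha1 : ‖aInner A (T x) x‖ ≤ aNorm A (T x) := by
    simpa [hx] using abs_aInner_le hA (T x) x
  have habs : (0:ℝ) ≤ ‖aInner A (T x) x‖ := norm_nonneg _
  refine le_trans ?_ h1
  have hq1 : ‖aInner A (T x) x‖ ^ 2 ≤ aNorm A (T x) ^ 2 :=
    pow_le_pow_left₀ habs ha1 2
  have hkey : ‖aInner A (T x) x‖ ^ 2
      ≤ α * ‖aInner A (T x) x‖ ^ 2 + (1 - α) * aNorm A (T x) ^ 2 := by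
    have h1a : (0:ℝ) ≤ 1 - α := by have := hα.2; linarith
    nlinarith [mul_le_mul_of_nonneg_left hq1 h1a]
  calc ‖aInner A (T x) x‖
      = Real.sqrt (‖aInner A (T x) x‖ ^ 2) := (Real.sqrt_sq habs).symm
    _ ≤ Real.sqrt (α * ‖aInner A (T x) x‖ ^ 2 + (1 - α) * aNorm A (T x) ^ 2) :=
        Real.sqrt_le_sqrt hkey

lemma quad_bound (hA : A.IsPositive) (hT : ABounded A T) (hα : α ∈ Set.Ico (0:ℝ) 1) (u : H) :
    ‖aInner A (T u) u‖ ≤ alphaNorm A T α * aNorm A u ^ 2 := by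
  by_cases h0 : aNorm A u = 0
  · have h := abs_aInner_le hA (T u) u
    rw [h0, mul_zero] at h
    have := norm_nonneg (aInner A (T u) u)
    rw [h0]
    nlinarith
  · have ht : 0 < aNorm A u := lt_of_le_of_ne (aNorm_nonneg u) (Ne.symm h0)
    set t := aNorm A u with htdef
    have hv : aNorm A ((((t⁻¹ : ℝ)) : ℂ) • u) = 1 := by
      rw [aNorm_smul, Complex.norm_real, Real.norm_eq_abs, abs_of_pos (inv_pos.mpr ht)]
      field_simp; rfl
    have key := abs_aInner_le_alphaNorm hA hT hα hv
    have hcomp : aInner A (T ((((t⁻¹ : ℝ)) : ℂ) • u)) ((((t⁻¹ : ℝ)) : ℂ) • u)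
        = (((t⁻¹ ^ 2 : ℝ)) : ℂ) * aInner A (T u) u := by
      rw [map_smul, aInner_smul_left, aInner_smul_right, Complex.conj_ofReal]
      push_cast
      ring
    rw [hcomp, norm_mul, Complex.norm_real, Real.norm_eq_abs, abs_of_pos (by positivity)] at key
    have h2 : ‖aInner A (T u) u‖ ≤ alphaNorm A T α * t ^ 2 := by
      have ht2 : (0:ℝ) < t ^ 2 := by positivity
      rw [inv_pow] at key
      calc ‖aInner A (T u) u‖
          = t ^ 2 * ((t ^ 2)⁻¹ * ‖aInner A (T u) u‖) := by field_simp
        _ ≤ t ^ 2 * alphaNorm A T α := by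
            exact mul_le_mul_of_nonneg_left key ht2.le
        _ = alphaNorm A T α * t ^ 2 := mul_comm _ _
    exact h2

lemma sum_bound (hA : A.IsPositive) (hT : ABounded A T) (hα : α ∈ Set.Ico (0:ℝ) 1)
    {u w : H} (hu : aNorm A u = 1) (hw : aNorm A w = 1) :
    ‖aInner A (T u) w + aInner A (T w) u‖ ≤ 2 * alphaNorm A T α := by
  set s := alphaNorm A T α with hs
  have e1 : aInner A (T (u + w)) (u + w) - aInner A (T (u - w)) (u - w)
      = 2 * (aInner A (T u) w + aInner A (T w) u) := by
    simp only [map_add, map_sub, aInner_add_left, aInner_add_right, aInner_sub_left,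
      aInner_sub_right]
    ring
  have par : aNorm A (u + w) ^ 2 + aNorm A (u - w) ^ 2 = 4 := by
    have e2 : aInner A (u + w) (u + w) + aInner A (u - w) (u - w)
        = 2 * aInner A u u + 2 * aInner A w w := by
      simp only [aInner_add_left, aInner_add_right, aInner_sub_left, aInner_sub_right]
      ring
    have e3 := congrArg Complex.re e2
    simp only [Complex.add_re, Complex.mul_re, Complex.re_ofNat, Complex.im_ofNat,
      zero_mul, sub_zero] at e3
    have hu1 : (aInner A u u).re = 1 := by rw [← aNorm_sq hA, hu]; norm_num
    have hw1 : (aInner A w w).re = 1 := by rw [← aNorm_sq hA, hw]; norm_num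
    rw [aNorm_sq hA, aNorm_sq hA]
    rw [hu1, hw1] at e3
    linarith
  have p1 := quad_bound hA hT hα (u + w)
  have p2 := quad_bound hA hT hα (u - w)
  have hsnn : 0 ≤ s := alphaNorm_nonneg T α
  have h4 : ‖2 * (aInner A (T u) w + aInner A (T w) u)‖ ≤ 4 * s := by
    rw [← e1]
    calc ‖aInner A (T (u + w)) (u + w) - aInner A (T (u - w)) (u - w)‖
        ≤ ‖aInner A (T (u + w)) (u + w)‖
          + ‖aInner A (T (u - w)) (u - w)‖ := by
            exact norm_sub_le _ _
      _ ≤ s * aNorm A (u + w) ^ 2 + s * aNorm A (u - w) ^ 2 := add_le_add p1 p2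
      _ = s * (aNorm A (u + w) ^ 2 + aNorm A (u - w) ^ 2) := by ring
      _ = 4 * s := by rw [par]; ring
  rw [norm_mul] at h4
  simp only [Complex.norm_two] at h4
  linarith

lemma unit_aNorm_le_two (hA : A.IsPositive) (hT : ABounded A T) (hα : α ∈ Set.Ico (0:ℝ) 1)
    {x : H} (hx : aNorm A x = 1) :
    aNorm A (T x) ≤ 2 * alphaNorm A T α := by
  set s := alphaNorm A T α with hs
  have hsnn : 0 ≤ s := alphaNorm_nonneg T α
  by_cases h0 : aNorm A (T x) = 0
  · rw [h0]; linarith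
  · have hr : 0 < aNorm A (T x) := lt_of_le_of_ne (aNorm_nonneg _) (Ne.symm h0)
    set r := aNorm A (T x) with hrdef
    set y := (((r⁻¹ : ℝ)) : ℂ) • (T x) with hy
    have hy1 : aNorm A y = 1 := by
      rw [hy, aNorm_smul, Complex.norm_real, Real.norm_eq_abs, abs_of_pos (inv_pos.mpr hr)]
      field_simp; rfl
    set a := aInner A (T x) y with ha
    set b := aInner A (T y) x with hb
    have c1 : ‖a + b‖ ≤ 2 * s := sum_bound hA hT hα hx hy1
    have hix : aNorm A (Complex.I • x) = 1 := by
      rw [aNorm_smul, Complex.norm_I, hx, one_mul]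
    have c2' := sum_bound hA hT hα hix hy1
    have e2 : aInner A (T (Complex.I • x)) y = -Complex.I * a := by
      rw [map_smul, aInner_smul_left, Complex.conj_I, ha]
    have e3 : aInner A (T y) (Complex.I • x) = Complex.I * b := by
      rw [aInner_smul_right, hb]
    rw [e2, e3] at c2'
    have c2 : ‖a - b‖ ≤ 2 * s := by
      have h7 : -Complex.I * a + Complex.I * b = Complex.I * (b - a) := by ring
      rw [h7, norm_mul, Complex.norm_I, one_mul] at c2'
      rw [norm_sub_rev]
      exact c2'
    have habs : ‖a‖ ≤ 2 * s := by
      have : (2 : ℂ) * a = (a + b) + (a - b) := by ring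
      have h5 : ‖(2:ℂ) * a‖ ≤ 4 * s := by
        rw [this]
        calc ‖(a + b) + (a - b)‖ ≤ ‖a + b‖ + ‖a - b‖ :=
          norm_add_le _ _
        _ ≤ 4 * s := by linarith
      rw [norm_mul, Complex.norm_two] at h5
      linarith
    have e4 : a = ((r⁻¹ : ℝ) : ℂ) * ((r ^ 2 : ℝ) : ℂ) := by
      rw [ha, hy, aInner_smul_right, aInner_self_ofReal hA, ← aNorm_sq hA, ← hrdef]
    rw [e4, norm_mul, Complex.norm_real, Real.norm_eq_abs, Complex.norm_real, Real.norm_eq_abs,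
      abs_of_pos (inv_pos.mpr hr), abs_of_pos (by positivity)] at habs
    have : r⁻¹ * r ^ 2 = r := by field_simp
    rw [this] at habs
    exact habs

lemma scale_bound (hT : ABounded A T) {K : ℝ} (hK : 0 ≤ K)
    (h1 : ∀ x, aNorm A x = 1 → aNorm A (T x) ≤ K) :
    ∀ x, aNorm A (T x) ≤ K * aNorm A x := by
  intro x
  by_cases h0 : aNorm A x = 0
  · obtain ⟨c, hc, hb⟩ := hT
    have h2 := hb x
    rw [h0, mul_zero] at h2
    have h3 : aNorm A (T x) = 0 := le_antisymm h2 (aNorm_nonneg _)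
    rw [h3, h0, mul_zero]
  · have ht : 0 < aNorm A x := lt_of_le_of_ne (aNorm_nonneg _) (Ne.symm h0)
    set t := aNorm A x with htdef
    have hv : aNorm A ((((t⁻¹ : ℝ)) : ℂ) • x) = 1 := by
      rw [aNorm_smul, Complex.norm_real, Real.norm_eq_abs, abs_of_pos (inv_pos.mpr ht)]
      field_simp; rfl
    have key := h1 _ hv
    rw [map_smul, aNorm_smul, Complex.norm_real, Real.norm_eq_abs, abs_of_pos (inv_pos.mpr ht)] at key
    calc aNorm A (T x) = t * (t⁻¹ * aNorm A (T x)) := by field_simp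
      _ ≤ t * K := mul_le_mul_of_nonneg_left key ht.le
      _ = K * t := mul_comm _ _

lemma unit_aNorm_le_div (hA : A.IsPositive) (hT : ABounded A T) (hα : α ∈ Set.Ico (0:ℝ) 1)
    {x : H} (hx : aNorm A x = 1) :
    aNorm A (T x) ≤ alphaNorm A T α / Real.sqrt (1 - α) := by
  set s := alphaNorm A T α with hs
  have hsnn : 0 ≤ s := alphaNorm_nonneg T α
  have h1α : (0:ℝ) < 1 - α := by have := hα.2; linarith
  have h1 := le_alphaNorm hA hT hα hx
  set b := aNorm A (T x) with hbdef
  have hbnn : 0 ≤ b := aNorm_nonneg _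
  have habs : (0:ℝ) ≤ ‖aInner A (T x) x‖ := norm_nonneg _
  have hexpr : (0:ℝ) ≤ α * ‖aInner A (T x) x‖ ^ 2 + (1 - α) * b ^ 2 := by
    have := hα.1; positivity
  have h2 : α * ‖aInner A (T x) x‖ ^ 2 + (1 - α) * b ^ 2 ≤ s ^ 2 := by
    have h3 := Real.sq_sqrt hexpr
    nlinarith [Real.sqrt_nonneg (α * ‖aInner A (T x) x‖ ^ 2 + (1 - α) * b ^ 2)]
  have h4 : (1 - α) * b ^ 2 ≤ s ^ 2 := by nlinarith [hα.1]
  have h5 : (b * Real.sqrt (1 - α)) ^ 2 ≤ s ^ 2 := by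
    rw [mul_pow, Real.sq_sqrt h1α.le]; linarith
  have h6 : b * Real.sqrt (1 - α) ≤ s := by
    have := Real.sqrt_le_sqrt h5
    rwa [Real.sqrt_sq (by positivity), Real.sqrt_sq hsnn] at this
  rw [le_div_iff₀ (Real.sqrt_pos.mpr h1α)]
  exact h6

lemma comp_alphaNorm_le (hA : A.IsPositive) {S : H →L[ℂ] H} {KT KS : ℝ}
    (hKT : 0 ≤ KT) (hKS : 0 ≤ KS)
    (h1 : ∀ x, aNorm A (T x) ≤ KT * aNorm A x) (h2 : ∀ x, aNorm A (S x) ≤ KS * aNorm A x)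
    (hα : α ∈ Set.Ico (0:ℝ) 1) :
    alphaNorm A (T ∘L S) α ≤ KT * KS := by
  apply Real.sSup_le
  · rintro r ⟨x, hx, rfl⟩
    have hTS : aNorm A ((T ∘L S) x) ≤ KT * KS := by
      rw [ContinuousLinearMap.comp_apply]
      calc aNorm A (T (S x)) ≤ KT * aNorm A (S x) := h1 _
        _ ≤ KT * (KS * aNorm A x) := by
            exact mul_le_mul_of_nonneg_left (h2 x) hKT
        _ = KT * KS := by rw [hx]; ring
    have habs : ‖aInner A ((T ∘L S) x) x‖ ≤ aNorm A ((T ∘L S) x) := by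
      simpa [hx] using abs_aInner_le hA ((T ∘L S) x) x
    have hnn := aNorm_nonneg (A := A) ((T ∘L S) x)
    have habs0 : (0:ℝ) ≤ ‖aInner A ((T ∘L S) x) x‖ := norm_nonneg _
    calc Real.sqrt (α * ‖aInner A ((T ∘L S) x) x‖ ^ 2
          + (1 - α) * aNorm A ((T ∘L S) x) ^ 2)
        ≤ Real.sqrt ((KT * KS) ^ 2) := by
          apply Real.sqrt_le_sqrt
          have hq1 : ‖aInner A ((T ∘L S) x) x‖ ^ 2 ≤ aNorm A ((T ∘L S) x) ^ 2 :=
            pow_le_pow_left₀ habs0 habs 2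
          have hq2 : aNorm A ((T ∘L S) x) ^ 2 ≤ (KT * KS) ^ 2 := pow_le_pow_left₀ hnn hTS 2
          nlinarith [mul_le_mul_of_nonneg_left hq1 hα.1, hα.2]
      _ = KT * KS := Real.sqrt_sq (by positivity)
  · positivity

end Aux

theorem stmt12 (A T S : H →L[ℂ] H) (hA : A.IsPositive)
    (hT : ABounded A T) (hS : ABounded A S) (α : ℝ) (hα : α ∈ Set.Ico (0:ℝ) 1) :
    alphaNorm A (T ∘L S) α ≤
      min (min (2 / Real.sqrt (1 - α)) (1 / (1 - α))) 4 *
        (alphaNorm A T α * alphaNorm A S α) := by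
  have h1α : (0:ℝ) < 1 - α := by have := hα.2; linarith
  have hsq : (0:ℝ) < Real.sqrt (1 - α) := Real.sqrt_pos.mpr h1α
  set sT := alphaNorm A T α with hsT
  set sS := alphaNorm A S α with hsS
  have hsTnn : 0 ≤ sT := alphaNorm_nonneg T α
  have hsSnn : 0 ≤ sS := alphaNorm_nonneg S α
  have pT2 : ∀ x, aNorm A (T x) ≤ (2 * sT) * aNorm A x :=
    scale_bound hT (by positivity) (fun x hx => unit_aNorm_le_two hA hT hα hx)
  have pTd : ∀ x, aNorm A (T x) ≤ (sT / Real.sqrt (1 - α)) * aNorm A x :=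
    scale_bound hT (by positivity) (fun x hx => unit_aNorm_le_div hA hT hα hx)
  have pS2 : ∀ x, aNorm A (S x) ≤ (2 * sS) * aNorm A x :=
    scale_bound hS (by positivity) (fun x hx => unit_aNorm_le_two hA hS hα hx)
  have pSd : ∀ x, aNorm A (S x) ≤ (sS / Real.sqrt (1 - α)) * aNorm A x :=
    scale_bound hS (by positivity) (fun x hx => unit_aNorm_le_div hA hS hα hx)
  have b1 := comp_alphaNorm_le hA (by positivity) (by positivity) pT2 pSd hα
  have b2 := comp_alphaNorm_le hA (by positivity) (by positivity) pTd pSd hα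
  have b3 := comp_alphaNorm_le hA (by positivity) (by positivity) pT2 pS2 hα
  rw [min_mul_of_nonneg _ _ (mul_nonneg hsTnn hsSnn),
    min_mul_of_nonneg _ _ (mul_nonneg hsTnn hsSnn)]
  refine le_min (le_min ?_ ?_) ?_
  · calc alphaNorm A (T ∘L S) α ≤ (2 * sT) * (sS / Real.sqrt (1 - α)) := b1
      _ = 2 / Real.sqrt (1 - α) * (sT * sS) := by ring
  · calc alphaNorm A (T ∘L S) α
        ≤ (sT / Real.sqrt (1 - α)) * (sS / Real.sqrt (1 - α)) := b2
      _ = 1 / (1 - α) * (sT * sS) := by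
          rw [div_mul_div_comm, Real.mul_self_sqrt h1α.le]; ring
  · calc alphaNorm A (T ∘L S) α ≤ (2 * sT) * (2 * sS) := b3
      _ = 4 * (sT * sS) := by ring
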